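/- Let X be a T1 collectionwise normal space that is weakly linearly Lindelöf. Then X has countable extent, i.e. every closed discrete subset of X is countable. -/

import Mathlib

open Set Topology Cardinal

universe u

/-- `x` is a complete accumulation point of the family `𝒰`: every open neighborhood
of `x` meets `#𝒰`-many members of `𝒰`. -/
def IsCompleteAccPt {X : Type u} [TopologicalSpace X] (𝒰 : Set (Set X)) (x : X) : Prop :=
  ∀ V : Set X, IsOpen V → x ∈ V → #↥{U ∈ 𝒰 | (U ∩ V).Nonempty} = #↥𝒰

/-- A space is weakly linearly Lindelöf if every family of nonempty open sets of
regular uncountable cardinality has a complete accumulation point. -/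
def WeaklyLinearlyLindelof (X : Type u) [TopologicalSpace X] : Prop :=
  ∀ 𝒰 : Set (Set X), (∀ U ∈ 𝒰, IsOpen U ∧ U.Nonempty) →
    (#↥𝒰).IsRegular → ℵ₀ < #↥𝒰 → ∃ x : X, IsCompleteAccPt 𝒰 x

/-- A space is collectionwise normal if every discrete family of pairwise
disjoint closed sets can be separated by a pairwise disjoint family of open
sets. -/
def CollectionwiseNormal (X : Type u) [TopologicalSpace X] : Prop :=
  ∀ {ι : Type u} (F : ι → Set X), (∀ i, IsClosed (F i)) →
    (Pairwise fun i j => Disjoint (F i) (F j)) →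
    (∀ x : X, ∃ U : Set X, IsOpen U ∧ x ∈ U ∧
      {i : ι | (U ∩ F i).Nonempty}.Subsingleton) →
    ∃ G : ι → Set X, (∀ i, IsOpen (G i)) ∧ (∀ i, F i ⊆ G i) ∧
      Pairwise fun i j => Disjoint (G i) (G j)

/-- In a set with the discrete subspace topology, every point has an open
neighborhood meeting the set only in itself. -/
lemma exists_isolating {X : Type u} [TopologicalSpace X] {D : Set X}
    (hd : DiscreteTopology D) {y : X} (hy : y ∈ D) :
    ∃ U : Set X, IsOpen U ∧ y ∈ U ∧ U ∩ D ⊆ {y} := by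
  have hopen : IsOpen ({⟨y, hy⟩} : Set D) := isOpen_discrete _
  rw [isOpen_induced_iff] at hopen
  obtain ⟨U, hU, hUeq⟩ := hopen
  refine ⟨U, hU, ?_, ?_⟩
  · have : (⟨y, hy⟩ : D) ∈ (Subtype.val ⁻¹' U : Set D) := by
      rw [hUeq]; exact rfl
    exact this
  · rintro z ⟨hzU, hzD⟩
    have : (⟨z, hzD⟩ : D) ∈ (Subtype.val ⁻¹' U : Set D) := hzU
    rw [hUeq] at this
    exact congrArg Subtype.val this

/-- Any subset of a closed discrete set is closed. -/
lemma subset_closed_discrete_isClosed {X : Type u} [TopologicalSpace X] {D : Set X}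
    (hD : IsClosed D) (hd : DiscreteTopology D) {S : Set X} (hS : S ⊆ D) :
    IsClosed S := by
  rw [← closure_eq_iff_isClosed, Set.Subset.antisymm_iff]
  refine ⟨?_, subset_closure⟩
  intro y hy
  have hyD : y ∈ D := hD.closure_subset_iff.mpr (hS.trans subset_rfl) hy
  obtain ⟨U, hUopen, hyU, hiso⟩ := exists_isolating hd hyD
  rw [mem_closure_iff] at hy
  obtain ⟨z, hzU, hzS⟩ := hy U hUopen hyU
  have : z ∈ ({y} : Set X) := hiso ⟨hzU, hS hzS⟩
  rwa [← this]

/-- A collectionwise normal weakly linearly Lindelöf T1 space has countable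
extent: every closed discrete subset is countable. -/
theorem collectionwiseNormal_weaklyLinearlyLindelof_countable_extent
    (X : Type u) [TopologicalSpace X] [T1Space X]
    (hcwn : CollectionwiseNormal X) (hwll : WeaklyLinearlyLindelof X) :
    ∀ D : Set X, IsClosed D → DiscreteTopology D → D.Countable := by
  intro D hDcl hDd
  by_contra hD
  -- `D` has at least `ℵ₁` points; pick a subset of size exactly `ℵ₁`.
  have hcard : ℵ₁ ≤ #↥D := by
    rw [← Cardinal.succ_aleph0]
    refine Order.succ_le_of_lt ?_
    rw [lt_iff_not_ge]
    intro h
    exact hD (Set.countable_coe_iff.mp (Cardinal.mk_le_aleph0_iff.mp h))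
  obtain ⟨D', hD'sub, hD'card⟩ := Cardinal.le_mk_iff_exists_subset.mp hcard
  -- singletons of `D'` form a discrete family of closed sets
  have hD'cl : IsClosed D' := subset_closed_discrete_isClosed hDcl hDd hD'sub
  set F : ↥D' → Set X := fun i => ({(i : X)} : Set X) with hF
  have hFdisc : ∀ x : X, ∃ U : Set X, IsOpen U ∧ x ∈ U ∧
      {i : ↥D' | (U ∩ F i).Nonempty}.Subsingleton := by
    intro x
    by_cases hx : x ∈ D
    · obtain ⟨U, hUopen, hxU, hiso⟩ := exists_isolating hDd hx
      refine ⟨U, hUopen, hxU, ?_⟩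
      intro i hi j hj
      obtain ⟨z, hzU, hzF⟩ := hi
      obtain ⟨w, hwU, hwF⟩ := hj
      have hz : (i : X) = x := by
        have hzi := Set.mem_singleton_iff.mp hzF
        rw [hzi] at hzU
        exact Set.mem_singleton_iff.mp (hiso ⟨hzU, hD'sub i.2⟩)
      have hw : (j : X) = x := by
        have hwj := Set.mem_singleton_iff.mp hwF
        rw [hwj] at hwU
        exact Set.mem_singleton_iff.mp (hiso ⟨hwU, hD'sub j.2⟩)
      exact Subtype.ext (hz.trans hw.symm)
    · refine ⟨Dᶜ, hDcl.isOpen_compl, hx, ?_⟩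
      intro i hi
      exfalso
      obtain ⟨z, hzU, hzF⟩ := hi
      exact hzU (hD'sub (by rw [Set.mem_singleton_iff.mp hzF]; exact i.2))
  obtain ⟨G, hGopen, hGsub, hGdisj⟩ := hcwn F (fun i => isClosed_singleton)
    (fun i j hij => Set.disjoint_singleton.mpr (fun h => hij (Subtype.ext h))) hFdisc
  have hmemG : ∀ i : ↥D', (i : X) ∈ G i := fun i => hGsub i rfl
  have hD'union : D' ⊆ ⋃ i, G i := by
    intro x hx
    exact Set.mem_iUnion.mpr ⟨⟨x, hx⟩, hmemG ⟨x, hx⟩⟩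
  -- use normality (a special case of CWN) to separate `D'` from the complement
  -- of `⋃ G i`.
  set C : Set X := (⋃ i, G i)ᶜ with hC
  set F2 : ULift.{u} Bool → Set X := fun b => if b.down then D' else C with hF2
  have hF2cl : ∀ b, IsClosed (F2 b) := by
    rintro ⟨b⟩
    cases b
    · exact isClosed_compl_iff.mpr (isOpen_iUnion hGopen)
    · exact hD'cl
  have hF2disj : Pairwise fun b b' => Disjoint (F2 b) (F2 b') := by
    rintro ⟨b⟩ ⟨b'⟩ hbb'
    have hDC : Disjoint D' C := by
      rw [Set.disjoint_compl_right_iff_subset]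
      exact hD'union
    cases b <;> cases b' <;> simp_all [F2] <;> exact hDC.symm
  have hF2disc : ∀ x : X, ∃ U : Set X, IsOpen U ∧ x ∈ U ∧
      {b : ULift.{u} Bool | (U ∩ F2 b).Nonempty}.Subsingleton := by
    intro x
    by_cases hx : x ∈ ⋃ i, G i
    · refine ⟨⋃ i, G i, isOpen_iUnion hGopen, hx, ?_⟩
      rintro ⟨b⟩ hb ⟨b'⟩ hb'
      have hbtrue : ∀ c : Bool, (((⋃ i, G i) ∩ F2 ⟨c⟩).Nonempty) → c = true := by
        rintro c ⟨z, hz1, hz2⟩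
        cases c
        · exact absurd hz1 hz2
        · rfl
      rw [hbtrue b hb, hbtrue b' hb']
    · have hxD' : x ∉ D' := fun h => hx (hD'union h)
      refine ⟨D'ᶜ, hD'cl.isOpen_compl, hxD', ?_⟩
      rintro ⟨b⟩ hb ⟨b'⟩ hb'
      have hbfalse : ∀ c : Bool, ((D'ᶜ ∩ F2 ⟨c⟩).Nonempty) → c = false := by
        rintro c ⟨z, hz1, hz2⟩
        cases c
        · rfl
        · exact absurd hz2 hz1
      rw [hbfalse b hb, hbfalse b' hb']
  obtain ⟨G2, hG2open, hG2sub, hG2disj⟩ := hcwn F2 hF2cl hF2disj hF2disc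
  set H : Set X := G2 ⟨true⟩ with hH
  have hD'H : D' ⊆ H := hG2sub ⟨true⟩
  have hCH : C ⊆ G2 ⟨false⟩ := hG2sub ⟨false⟩
  have hclH : closure H ⊆ ⋃ i, G i := by
    have hdisj : Disjoint (G2 ⟨false⟩) (closure H) :=
      ((hG2disj (by simp : (⟨false⟩ : ULift.{u} Bool) ≠ ⟨true⟩)).closure_right
        (hG2open _))
    intro z hz
    by_contra hzC
    exact (Set.disjoint_left.mp hdisj (hCH hzC)) hz
  -- the family of open sets
  set f : ↥D' → Set X := fun i => G i ∩ H with hf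
  have hfmem : ∀ i : ↥D', (i : X) ∈ f i := fun i => ⟨hmemG i, hD'H i.2⟩
  have hfinj : Function.Injective f := by
    intro i j hij
    by_contra hne
    have h1 := hfmem i
    rw [hij] at h1
    exact Set.disjoint_left.mp (hGdisj hne) (hmemG i) h1.1
  set 𝒰 : Set (Set X) := Set.range f with h𝒰
  have h𝒰card : #↥𝒰 = ℵ₁ := by
    rw [h𝒰, Cardinal.mk_range_eq f hfinj, hD'card]
  have h𝒰open : ∀ U ∈ 𝒰, IsOpen U ∧ U.Nonempty := by
    rintro U ⟨i, rfl⟩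
    exact ⟨(hGopen i).inter (hG2open _), ⟨i, hfmem i⟩⟩
  obtain ⟨p, hp⟩ := hwll 𝒰 h𝒰open (h𝒰card ▸ Cardinal.isRegular_aleph_one)
    (h𝒰card ▸ Cardinal.aleph0_lt_aleph_one)
  -- `p` lies in the closure of `H`, hence in some `G i₀`
  have hpclH : p ∈ closure H := by
    rw [mem_closure_iff]
    intro V hVopen hpV
    have hcard := hp V hVopen hpV
    rw [h𝒰card] at hcard
    have hne : Nonempty ↥{U ∈ 𝒰 | (U ∩ V).Nonempty} := by
      rw [← Cardinal.mk_ne_zero_iff, hcard]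
      exact (Cardinal.aleph0_lt_aleph_one.trans_le' (by positivity)).ne'
    obtain ⟨⟨U, hU𝒰, z, hzU, hzV⟩⟩ := hne
    obtain ⟨i, rfl⟩ := hU𝒰
    exact ⟨z, hzV, hzU.2⟩
  obtain ⟨i₀, hpG⟩ := Set.mem_iUnion.mp (hclH hpclH)
  -- but `G i₀` meets only one member of the family: contradiction
  have hcard := hp (G i₀) (hGopen i₀) hpG
  rw [h𝒰card] at hcard
  have hsub : {U ∈ 𝒰 | (U ∩ G i₀).Nonempty} ⊆ {f i₀} := by
    rintro U ⟨⟨i, rfl⟩, z, hz1, hz2⟩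
    have : i = i₀ := by
      by_contra hne
      exact Set.disjoint_left.mp (hGdisj hne) hz1.1 hz2
    rw [this]; rfl
  have hle : #↥{U ∈ 𝒰 | (U ∩ G i₀).Nonempty} ≤ 1 := by
    calc #↥{U ∈ 𝒰 | (U ∩ G i₀).Nonempty} ≤ #↥({f i₀} : Set (Set X)) :=
          Cardinal.mk_le_mk_of_subset hsub
      _ = 1 := Cardinal.mk_singleton _
  rw [hcard] at hle
  exact absurd hle (not_le.mpr (Cardinal.one_lt_aleph0.trans Cardinal.aleph0_lt_aleph_one))
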